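/- Let K_Φ(M, τ) be a normed ideal of a semifinite von Neumann algebra and let K_Φ^0 denote the Φ-closure of F(M, τ). Suppose {x_n} ⊆ K_Φ^0 satisfies: (1) Σ_n x_n converges to x ∈ M in the weak* topology, and (2) Σ_n Φ(x_n) < ∞. Then x ∈ K_Φ^0 and Φ(x − Σ_{n=1}^k x_n) → 0 as k → ∞. -/

import Mathlib

open ContinuousLinearMap Filter
open scoped InnerProductSpace Topology ENNReal

noncomputable section

namespace Stmt

variable {H : Type} [NormedAddCommGroup H] [InnerProductSpace ℂ H] [CompleteSpace H]

/-- The commutant of a set of bounded operators. -/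
def comm (S : Set (H →L[ℂ] H)) : Set (H →L[ℂ] H) := {y | ∀ x ∈ S, x * y = y * x}

/-- An orthogonal projection. -/
def IsProjection (p : H →L[ℂ] H) : Prop := IsSelfAdjoint p ∧ p * p = p

/-- `M` is a factor: its center consists of the scalars. -/
def IsFactor (M : VonNeumannAlgebra H) : Prop :=
  ∀ x ∈ M, x ∈ M.commutant → ∃ c : ℂ, x = c • (1 : H →L[ℂ] H)

/-- A unitary element of `M`. -/
def IsUnitaryIn (M : VonNeumannAlgebra H) (u : H →L[ℂ] H) : Prop :=
  u ∈ M ∧ star u * u = 1 ∧ u * star u = 1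

/-- A projection is infinite in `M` if it is Murray–von Neumann equivalent (inside `M`)
to a proper subprojection of itself. -/
def InfiniteProjIn (M : VonNeumannAlgebra H) (p : H →L[ℂ] H) : Prop :=
  ∃ v, v ∈ M ∧ star v * v = p ∧ p * v = v ∧ v * star v ≠ p

/-- `M` is properly infinite (for factors: the identity is an infinite projection). -/
def ProperlyInfinite (M : VonNeumannAlgebra H) : Prop := InfiniteProjIn M 1

/-- A projection of `M` with finite trace. -/
def FiniteTracedProj (M : VonNeumannAlgebra H) (τ : (H →L[ℂ] H) → ℝ≥0∞)
    (p : H →L[ℂ] H) : Prop :=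
  p ∈ M ∧ IsProjection p ∧ τ p < ⊤

/-- `x ∈ F(M,τ)`: the range projection of `x` has finite trace, equivalently `x` is
left-supported by a projection of finite trace. -/
def FiniteRankIn (M : VonNeumannAlgebra H) (τ : (H →L[ℂ] H) → ℝ≥0∞)
    (x : H →L[ℂ] H) : Prop :=
  x ∈ M ∧ ∃ p, FiniteTracedProj M τ p ∧ p * x = x

/-- `τ` is a faithful normal semifinite tracial weight on `M` (the properties used here). -/
structure IsTracialWeight (M : VonNeumannAlgebra H) (τ : (H →L[ℂ] H) → ℝ≥0∞) : Prop where
  tracial : ∀ x ∈ M, τ (star x * x) = τ (x * star x)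
  additive : ∀ x ∈ M, ∀ y ∈ M, ContinuousLinearMap.IsPositive x →
    ContinuousLinearMap.IsPositive y → τ (x + y) = τ x + τ y
  faithful : ∀ x ∈ M, ContinuousLinearMap.IsPositive x → τ x = 0 → x = 0
  semifinite : ∀ p ∈ M, IsProjection p → p ≠ 0 →
      ∃ q ∈ M, IsProjection q ∧ q ≠ 0 ∧ q * p = q ∧ τ q < ⊤

/-- A normed ideal `K_Φ(M,τ)` of `(M,τ)`: a two-sided ideal of `M` with a complete,
unitarily invariant, operator-norm dominating norm `Φ`, squeezed between the
finite-rank ideal `F(M,τ)` and its operator-norm closure `K(M,τ)`. -/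
structure NormedIdeal (M : VonNeumannAlgebra H) (τ : (H →L[ℂ] H) → ℝ≥0∞) where
  K : Set (H →L[ℂ] H)
  Φ : (H →L[ℂ] H) → ℝ
  subset_M : K ⊆ (M : Set (H →L[ℂ] H))
  zero_mem : (0 : H →L[ℂ] H) ∈ K
  add_mem : ∀ {x y}, x ∈ K → y ∈ K → x + y ∈ K
  smul_mem : ∀ (c : ℂ) {x}, x ∈ K → c • x ∈ K
  mul_mem_left : ∀ {a x}, a ∈ M → x ∈ K → a * x ∈ K
  mul_mem_right : ∀ {a x}, a ∈ M → x ∈ K → x * a ∈ K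
  Φ_nonneg : ∀ x, 0 ≤ Φ x
  Φ_eq_zero : ∀ x ∈ K, Φ x = 0 → x = 0
  Φ_add : ∀ x y, Φ (x + y) ≤ Φ x + Φ y
  Φ_smul : ∀ (c : ℂ) (x), Φ (c • x) = ‖c‖ * Φ x
  Φ_unitary : ∀ u v x, IsUnitaryIn M u → IsUnitaryIn M v → Φ (u * x * v) = Φ x
  dom_const : ℝ
  dom_pos : 0 < dom_const
  dominating : ∀ x ∈ K, dom_const * ‖x‖ ≤ Φ x
  finite_mem : ∀ x, FiniteRankIn M τ x → x ∈ K
  subset_closure : K ⊆ closure {x | FiniteRankIn M τ x}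
  complete : ∀ f : ℕ → H →L[ℂ] H, (∀ n, f n ∈ K) →
      (∀ ε : ℝ, 0 < ε → ∃ N, ∀ m ≥ N, ∀ n ≥ N, Φ (f m - f n) < ε) →
      ∃ x ∈ K, ∀ ε : ℝ, 0 < ε → ∃ N, ∀ n ≥ N, Φ (x - f n) < ε

/-- Membership in `K_Φ^0(M,τ)`, the `Φ`-norm closure of `F(M,τ)`. -/
def NormedIdeal.memK0 {M : VonNeumannAlgebra H} {τ : (H →L[ℂ] H) → ℝ≥0∞}
    (NI : NormedIdeal M τ) (x : H →L[ℂ] H) : Prop :=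
  x ∈ NI.K ∧ ∀ ε : ℝ, 0 < ε → ∃ y, FiniteRankIn M τ y ∧ NI.Φ (x - y) < ε

/-- `y` is irreducible in `M`: every projection of `M` commuting with `y` is trivial. -/
def IrreducibleIn (M : VonNeumannAlgebra H) (y : H →L[ℂ] H) : Prop :=
  ∀ p ∈ M, IsProjection p → p * y = y * p → p = 0 ∨ p = 1

/-- The real part of an operator. -/
def ReOp (x : H →L[ℂ] H) : H →L[ℂ] H := (2 : ℂ)⁻¹ • (x + star x)

/-- The imaginary part of an operator. -/
def ImOp (x : H →L[ℂ] H) : H →L[ℂ] H := (2 * Complex.I)⁻¹ • (x - star x)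

end Stmt

section Aux

open Stmt

variable {H : Type} [NormedAddCommGroup H] [InnerProductSpace ℂ H] [CompleteSpace H]

lemma aux_isClosed_centralizer (S : Set (H →L[ℂ] H)) : IsClosed (Set.centralizer S) := by
  have : Set.centralizer S = ⋂ s ∈ S, {x : H →L[ℂ] H | s * x = x * s} := by
    ext x; simp [Set.mem_centralizer_iff]
  rw [this]
  exact isClosed_biInter fun s _ =>
    isClosed_eq (continuous_const.mul continuous_id) (continuous_id.mul continuous_const)

lemma aux_isClosed_vn (M : VonNeumannAlgebra H) : IsClosed (M : Set (H →L[ℂ] H)) := by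
  rw [← M.centralizer_centralizer]
  exact aux_isClosed_centralizer _

lemma aux_proj_isPositive {p : H →L[ℂ] H} (h1 : IsSelfAdjoint p) (h2 : p * p = p) :
    p.IsPositive := by
  refine ⟨isSelfAdjoint_iff_isSymmetric.mp h1, fun ξ => ?_⟩
  have h3 : p ξ = p (p ξ) := by
    conv_lhs => rw [← h2]
    rfl
  have hadj : ContinuousLinearMap.adjoint p = p := h1
  have h4 : (inner ℂ (p ξ) ξ : ℂ) = inner ℂ (p ξ) (p ξ) := by
    have h5 : p (p ξ) = ContinuousLinearMap.adjoint p (p ξ) := by rw [hadj]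
    conv_lhs => rw [h3, h5]
    exact ContinuousLinearMap.adjoint_inner_left p ξ (p ξ)
  have : ContinuousLinearMap.reApplyInnerSelf p ξ = RCLike.re (inner ℂ (p ξ) ξ : ℂ) := rfl
  rw [this, h4]
  exact inner_self_nonneg

lemma aux_tau_mono (M : VonNeumannAlgebra H) (τ : (H →L[ℂ] H) → ℝ≥0∞)
    (hτ : IsTracialWeight M τ) {r s : H →L[ℂ] H} (hrM : r ∈ M) (hsM : s ∈ M)
    (hr : IsProjection r) (hs : IsProjection s) (hsr : s * r = r) (hrs : r * s = r) :
    τ r ≤ τ s := by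
  have hdM : s - r ∈ M := sub_mem hsM hrM
  have hdsa : IsSelfAdjoint (s - r) := hs.1.sub hr.1
  have hdidem : (s - r) * (s - r) = s - r := by
    rw [sub_mul, mul_sub, mul_sub, hs.2, hr.2, hsr, hrs]
    abel
  have : τ s = τ r + τ (s - r) := by
    have := hτ.additive r hrM (s - r) hdM (aux_proj_isPositive hr.1 hr.2)
      (aux_proj_isPositive hdsa hdidem)
    rw [← this, add_sub_cancel]
  rw [this]
  exact le_self_add


lemma aux_inner_eq {b A : H →L[ℂ] H} (hAsa : IsSelfAdjoint A) (hAA : A * A = star b * b)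
    (ξ ζ : H) : (inner ℂ (A ξ) (A ζ) : ℂ) = inner ℂ (b ξ) (b ζ) := by
  have hAadj : ContinuousLinearMap.adjoint A = A := hAsa
  have h1 : (inner ℂ ξ ((star b * b) ζ) : ℂ) = inner ℂ (b ξ) (b ζ) :=
    ContinuousLinearMap.adjoint_inner_right b ξ (b ζ)
  have h2 : (inner ℂ ξ ((A * A) ζ) : ℂ) = inner ℂ (A ξ) (A ζ) := by
    have h3 := ContinuousLinearMap.adjoint_inner_right A ξ (A ζ)
    rw [hAadj] at h3
    exact h3
  rw [← h1, ← h2, hAA]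

lemma aux_sqrt_exists (M : VonNeumannAlgebra H) {b : H →L[ℂ] H} (hb : b ∈ M) :
    ∃ A : H →L[ℂ] H, A ∈ M ∧ IsSelfAdjoint A ∧ A * A = star b * b := by
  set c : H →L[ℂ] H := star b * b with hc
  have hcM : c ∈ M := mul_mem (star_mem hb) hb
  have hcsa : IsSelfAdjoint c := IsSelfAdjoint.star_mul_self b
  have hcn : IsStarNormal c := hcsa.isStarNormal
  set f : ℂ → ℂ := fun z => ((Real.sqrt z.re : ℝ) : ℂ) with hf
  have hfc : Continuous f := Complex.continuous_ofReal.comp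
    (Real.continuous_sqrt.comp Complex.continuous_re)
  refine ⟨cfc f c, ?_, ?_, ?_⟩
  · -- membership in M via elemental star algebra
    have h1 : cfc f c ∈ StarAlgebra.elemental ℂ c := by
      rw [cfc_apply f c hcn hfc.continuousOn, cfcHom_eq_of_isStarNormal]
      exact SetLike.coe_mem _
    have h2 : StarAlgebra.elemental ℂ c ≤ M.toStarSubalgebra :=
      StarAlgebra.elemental.le_of_mem (by simpa using aux_isClosed_vn M) hcM
    exact h2 h1
  · -- selfadjoint
    have : cfc (fun z => star (f z)) c = star (cfc f c) := cfc_star f c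
    rw [IsSelfAdjoint, ← this]
    congr 1
    funext z
    simp [hf, Complex.star_def, Complex.conj_ofReal]
  · -- square
    have hmul : cfc (fun z => f z * f z) c = cfc f c * cfc f c :=
      cfc_mul f f c hfc.continuousOn hfc.continuousOn
    rw [← hmul]
    have hspec : ∀ z ∈ spectrum ℂ c, f z * f z = z := by
      intro z hz
      have hre : z = (z.re : ℂ) := hcsa.mem_spectrum_eq_re hz
      have hnn : 0 ≤ z.re := by
        have : (z.re : ℝ) ∈ spectrum ℝ c := by
          rw [← spectrum.algebraMap_mem_iff ℂ]
          simpa [Complex.coe_algebraMap] using hre ▸ hz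
        exact spectrum_star_mul_self_nonneg z.re this
      rw [hf]
      simp only []
      rw [← Complex.ofReal_mul, Real.mul_self_sqrt hnn, ← hre]
    calc cfc (fun z => f z * f z) c = cfc (fun z : ℂ => z) c := cfc_congr hspec
      _ = c := cfc_id ℂ c hcn

lemma aux_polar (M : VonNeumannAlgebra H) {b A : H →L[ℂ] H} (hbM : b ∈ M) (hAM : A ∈ M)
    (hAsa : IsSelfAdjoint A) (hAA : A * A = star b * b) :
    ∃ v P : H →L[ℂ] H, v ∈ M ∧ star v * v = P ∧ v * A = b ∧ v * P = v ∧ P * A = A ∧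
      (∀ r : H →L[ℂ] H, r * b = 0 → r * v = 0) ∧
      (∀ r : H →L[ℂ] H, r * A = A → r * P = P) := by
  have hAadj : ContinuousLinearMap.adjoint A = A := hAsa
  have hinner : ∀ ξ ζ : H, (inner ℂ (b ξ) (b ζ) : ℂ) = inner ℂ (A ξ) (A ζ) := by
    intro ξ ζ
    have h1 : (inner ℂ ξ ((star b * b) ζ) : ℂ) = inner ℂ (b ξ) (b ζ) :=
      ContinuousLinearMap.adjoint_inner_right b ξ (b ζ)
    have h2 : (inner ℂ ξ ((A * A) ζ) : ℂ) = inner ℂ (A ξ) (A ζ) := by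
      have h3 := ContinuousLinearMap.adjoint_inner_right A ξ (A ζ)
      rw [hAadj] at h3
      exact h3
    rw [← h1, ← h2, hAA]
  have hnormEq : ∀ ξ : H, ‖b ξ‖ = ‖A ξ‖ := by
    intro ξ
    have h := hinner ξ ξ
    rw [inner_self_eq_norm_sq_to_K, inner_self_eq_norm_sq_to_K] at h
    have h2 : (‖b ξ‖ : ℝ) ^ 2 = ‖A ξ‖ ^ 2 := by exact_mod_cast h
    nlinarith [norm_nonneg (b ξ), norm_nonneg (A ξ)]
  set D : Submodule ℂ H := LinearMap.range (A : H →ₗ[ℂ] H) with hDdef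
  have hker : LinearMap.ker (A : H →ₗ[ℂ] H) ≤ LinearMap.ker (b : H →ₗ[ℂ] H) := by
    intro ξ hξ
    rw [LinearMap.mem_ker] at hξ ⊢
    have h0 : ‖b ξ‖ = 0 := by
      rw [hnormEq]
      have : A ξ = 0 := hξ
      simp [this]
    simpa using h0
  set φ : D →ₗ[ℂ] H :=
    (Submodule.liftQ _ (b : H →ₗ[ℂ] H) hker).comp
      (LinearMap.quotKerEquivRange (A : H →ₗ[ℂ] H)).symm.toLinearMap with hφdef
  have hφ : ∀ ξ : H, φ ⟨A ξ, LinearMap.mem_range_self _ ξ⟩ = b ξ := by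
    intro ξ
    have h1 : (LinearMap.quotKerEquivRange (A : H →ₗ[ℂ] H)).symm
        ⟨A ξ, LinearMap.mem_range_self _ ξ⟩ = (LinearMap.ker (A : H →ₗ[ℂ] H)).mkQ ξ :=
      LinearMap.quotKerEquivRange_symm_apply_image _ ξ _
    rw [hφdef]
    simp only [LinearMap.comp_apply, LinearEquiv.coe_toLinearMap]
    rw [h1]
    rfl
  have hφd : ∀ d : D, ∃ ξ : H, A ξ = (d : H) ∧ φ d = b ξ := by
    intro d
    obtain ⟨ξ, hξ⟩ := d.2
    refine ⟨ξ, hξ, ?_⟩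
    have hd : d = ⟨A ξ, LinearMap.mem_range_self _ ξ⟩ := Subtype.ext hξ.symm
    rw [hd, hφ]
  have hφnorm : ∀ d : D, ‖φ d‖ = ‖d‖ := by
    intro d
    obtain ⟨ξ, hξ, hφd'⟩ := hφd d
    have hnd : ‖d‖ = ‖(d : H)‖ := rfl
    rw [hφd', hnormEq, hnd, ← hξ]
  set φc : D →L[ℂ] H := φ.mkContinuous 1 (fun d => by rw [hφnorm]; simp) with hφc
  set N : Submodule ℂ H := D.topologicalClosure with hN
  haveI : CompleteSpace N := D.isClosed_topologicalClosure.completeSpace_coe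
  set elin : D →ₗ[ℂ] N := Submodule.inclusion D.le_topologicalClosure with helin
  have helnorm : ∀ d : D, ‖elin d‖ = ‖d‖ := fun d => rfl
  set e : D →L[ℂ] N := elin.mkContinuous 1 (fun d => by rw [helnorm]; simp) with he
  have he_iso : Isometry e := AddMonoidHomClass.isometry_of_norm e (fun d => helnorm d)
  have hdense : DenseRange e := by
    intro y
    have hy : (y : H) ∈ closure (D : Set H) := by
      have h := y.2
      rw [← SetLike.mem_coe, Submodule.topologicalClosure_coe] at h
      exact h
    rw [mem_closure_iff_seq_limit] at hy
    obtain ⟨ξ, hmem, hlim⟩ := hy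
    rw [mem_closure_iff_seq_limit]
    refine ⟨fun n => e ⟨ξ n, hmem n⟩, fun n => ⟨_, rfl⟩, ?_⟩
    rw [tendsto_subtype_rng]
    exact hlim
  set v0 : N →L[ℂ] H := φc.extend e with hv0
  have hv0e : ∀ d : D, v0 (e d) = φ d := fun d => by
    rw [hv0, ContinuousLinearMap.extend_eq _ hdense he_iso.isUniformInducing]; rfl
  set π : H →L[ℂ] N := N.orthogonalProjectionOnto with hπ
  set v : H →L[ℂ] H := v0.comp π with hv
  have hDN : ∀ ξ : H, A ξ ∈ N := fun ξ => D.le_topologicalClosure (LinearMap.mem_range_self _ ξ)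
  have hπmem : ∀ (w : H) (hw : w ∈ N), π w = ⟨w, hw⟩ := fun w hw =>
    Submodule.orthogonalProjectionOnto_mem_subspace_eq_self (⟨w, hw⟩ : N)
  have hvA : ∀ ξ : H, v (A ξ) = b ξ := by
    intro ξ
    have h1 : v (A ξ) = v0 (π (A ξ)) := rfl
    rw [h1, hπmem _ (hDN ξ)]
    have h2 : (⟨A ξ, hDN ξ⟩ : N) = e ⟨A ξ, LinearMap.mem_range_self _ ξ⟩ := by
      apply Subtype.ext; rfl
    rw [h2, hv0e, hφ]
  have hvA' : v * A = b := by ext ξ; exact hvA ξ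
  have hv0inner : ∀ w1 w2 : N, (inner ℂ (v0 w1) (v0 w2) : ℂ) = inner ℂ (w1 : H) (w2 : H) := by
    refine fun w1 w2 => DenseRange.induction_on₂ hdense ?_ ?_ w1 w2
    · apply isClosed_eq
      · exact Continuous.inner (v0.continuous.comp continuous_fst)
          (v0.continuous.comp continuous_snd)
      · exact Continuous.inner (continuous_subtype_val.comp continuous_fst)
          (continuous_subtype_val.comp continuous_snd)
    · intro d1 d2
      rw [hv0e, hv0e]
      obtain ⟨ξ1, hξ1, hφ1⟩ := hφd d1
      obtain ⟨ξ2, hξ2, hφ2⟩ := hφd d2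
      rw [hφ1, hφ2, hinner]
      have hc1 : ((e d1 : N) : H) = (d1 : H) := rfl
      have hc2 : ((e d2 : N) : H) = (d2 : H) := rfl
      rw [hc1, hc2, hξ1, hξ2]
  set P : H →L[ℂ] H := N.subtypeL.comp π with hP
  have hPapply : ∀ ξ : H, P ξ = (π ξ : H) := fun _ => rfl
  have hPfix : ∀ w ∈ N, P w = w := fun w hw => by rw [hPapply, hπmem w hw]
  have hvP : v * P = v := by
    ext ξ
    show v (P ξ) = v ξ
    have h1 : π (P ξ) = π ξ := by
      rw [hPapply]
      exact Submodule.orthogonalProjectionOnto_mem_subspace_eq_self (π ξ)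
    show v0 (π (P ξ)) = v0 (π ξ)
    rw [h1]
  have hPA : P * A = A := by
    ext ξ
    show P (A ξ) = A ξ
    exact hPfix (A ξ) (hDN ξ)
  have hvv : star v * v = P := by
    ext ξ
    refine ext_inner_right ℂ fun ζ => ?_
    have h1 : ((star v * v) ξ) = ContinuousLinearMap.adjoint v (v ξ) := rfl
    rw [h1, ContinuousLinearMap.adjoint_inner_left v ζ (v ξ)]
    have h2 : (inner ℂ (v ξ) (v ζ) : ℂ) = inner ℂ ((π ξ : H)) ((π ζ : H)) := hv0inner (π ξ) (π ζ)
    rw [h2]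
    have h3 : (inner ℂ ((π ξ : H)) (ζ - (π ζ : H)) : ℂ) = 0 := by
      have hmem := Submodule.sub_starProjection_mem_orthogonal (K := N) ζ
      rw [Submodule.mem_orthogonal] at hmem
      exact hmem _ (π ξ).2
    rw [inner_sub_right] at h3
    have h4 : (inner ℂ ((π ξ : H)) ((π ζ : H)) : ℂ) = inner ℂ ((π ξ : H)) ζ :=
      (sub_eq_zero.mp h3).symm
    rw [h4, hPapply]
  have hNstable : ∀ u : H →L[ℂ] H, u * A = A * u → ∀ w ∈ N, u w ∈ N := by
    intro u hu w hw
    have hclosed : IsClosed {w : H | u w ∈ N} := by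
      have : {w : H | u w ∈ N} = u ⁻¹' (N : Set H) := rfl
      rw [this]
      exact IsClosed.preimage u.continuous D.isClosed_topologicalClosure
    have hsub : (D : Set H) ⊆ {w : H | u w ∈ N} := by
      rintro w hw'
      obtain ⟨ξ, rfl⟩ := hw'
      show u (A ξ) ∈ N
      have h5 : u (A ξ) = A (u ξ) := by
        have := ContinuousLinearMap.ext_iff.mp hu ξ
        simpa using this
      rw [h5]
      exact hDN _
    have hNsub : (N : Set H) ⊆ {w | u w ∈ N} := by
      have : (N : Set H) = closure (D : Set H) := Submodule.topologicalClosure_coe D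
      rw [this]
      exact closure_minimal hsub hclosed
    exact hNsub hw
  have hvcomm : ∀ u ∈ M.commutant, u * v = v * u := by
    intro u hu
    have huA : u * A = A * u := ((VonNeumannAlgebra.mem_commutant_iff.mp hu) A hAM).symm
    have hub : u * b = b * u := ((VonNeumannAlgebra.mem_commutant_iff.mp hu) b hbM).symm
    have hustar : star u ∈ M.commutant := star_mem hu
    have huAstar : star u * A = A * star u :=
      ((VonNeumannAlgebra.mem_commutant_iff.mp hustar) A hAM).symm
    have hcomm_onN : ∀ w ∈ N, u (v w) = v (u w) := by
      intro w hw
      have hclosed : IsClosed {w : H | u (v w) = v (u w)} :=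
        isClosed_eq (u.continuous.comp v.continuous) (v.continuous.comp u.continuous)
      have hsub : (D : Set H) ⊆ {w : H | u (v w) = v (u w)} := by
        rintro w hw'
        obtain ⟨ξ, rfl⟩ := hw'
        show u (v (A ξ)) = v (u (A ξ))
        rw [hvA]
        have h5 : u (A ξ) = A (u ξ) := by
          have := ContinuousLinearMap.ext_iff.mp huA ξ
          simpa using this
        rw [h5, hvA]
        have := ContinuousLinearMap.ext_iff.mp hub ξ
        simpa using this
      have hNsub : (N : Set H) ⊆ {w : H | u (v w) = v (u w)} := by
        have h6 : (N : Set H) = closure (D : Set H) := Submodule.topologicalClosure_coe D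
        rw [h6]
        exact closure_minimal hsub hclosed
      exact hNsub hw
    have hNperp : ∀ w ∈ Nᗮ, u w ∈ Nᗮ := by
      intro w hw
      rw [Submodule.mem_orthogonal] at hw ⊢
      intro n hn
      have h1 : (inner ℂ n (u w) : ℂ) = inner ℂ ((star u) n) w :=
        (ContinuousLinearMap.adjoint_inner_left u w n).symm
      rw [h1]
      exact hw _ (hNstable (star u) huAstar n hn)
    have hvNperp : ∀ w ∈ Nᗮ, v w = 0 := by
      intro w hw
      show v0 (π w) = 0
      have : π w = 0 := Submodule.orthogonalProjectionOnto_apply_of_mem_orthogonal hw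
      rw [this, map_zero]
    ext ξ
    show u (v ξ) = v (u ξ)
    have hξperp : ξ - (π ξ : H) ∈ Nᗮ := N.sub_starProjection_mem_orthogonal ξ
    have l1 : u (v ((π ξ : H))) = v (u ((π ξ : H))) := hcomm_onN _ (π ξ).2
    have l2 : u (v (ξ - (π ξ : H))) = v (u (ξ - (π ξ : H))) := by
      rw [hvNperp _ hξperp, map_zero, hvNperp _ (hNperp _ hξperp)]
    have hdecomp : ξ = (π ξ : H) + (ξ - (π ξ : H)) := by abel
    conv_lhs => rw [hdecomp]
    conv_rhs => rw [hdecomp]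
    rw [map_add v, map_add u, l1, map_add u, map_add v, l2]
  have hvM : v ∈ M := by
    have h7 : v ∈ M.commutant.commutant := VonNeumannAlgebra.mem_commutant_iff.mpr hvcomm
    rwa [VonNeumannAlgebra.commutant_commutant] at h7
  have hkill : ∀ r : H →L[ℂ] H, r * b = 0 → r * v = 0 := by
    intro r hr
    ext ξ
    show r (v ξ) = 0
    have hall : ∀ w : N, r (v0 w) = 0 := by
      refine fun w => DenseRange.induction_on hdense w ?_ ?_
      · exact isClosed_eq (r.continuous.comp v0.continuous) continuous_const
      · intro d
        rw [hv0e]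
        obtain ⟨ξ', hξ', hφ'⟩ := hφd d
        rw [hφ']
        have := ContinuousLinearMap.ext_iff.mp hr ξ'
        simpa using this
    exact hall (π ξ)
  have hfixP : ∀ r : H →L[ℂ] H, r * A = A → r * P = P := by
    intro r hr
    have hNfix : ∀ w ∈ N, r w = w := by
      intro w hw
      have hclosed : IsClosed {w : H | r w = w} := isClosed_eq r.continuous continuous_id
      have hsub : (D : Set H) ⊆ {w : H | r w = w} := by
        rintro w hw'
        obtain ⟨ξ, rfl⟩ := hw'
        show r (A ξ) = A ξ
        have := ContinuousLinearMap.ext_iff.mp hr ξ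
        simpa using this
      have hNsub : (N : Set H) ⊆ {w : H | r w = w} := by
        have h6 : (N : Set H) = closure (D : Set H) := Submodule.topologicalClosure_coe D
        rw [h6]
        exact closure_minimal hsub hclosed
      exact hNsub hw
    ext ξ
    show r (P ξ) = P ξ
    refine hNfix _ ?_
    rw [hPapply]
    exact (π ξ).2
  exact ⟨v, P, hvM, hvv, hvA', hvP, hPA, hkill, hfixP⟩


lemma aux_finiteRank_add' (M : VonNeumannAlgebra H) (τ : (H →L[ℂ] H) → ℝ≥0∞)
    (hτ : IsTracialWeight M τ) {y1 y2 : H →L[ℂ] H}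
    (h1 : FiniteRankIn M τ y1) (h2 : FiniteRankIn M τ y2) :
    FiniteRankIn M τ (y1 + y2) := by
  obtain ⟨h1M, p1, ⟨hp1M, hp1proj, hp1fin⟩, hp1y⟩ := h1
  obtain ⟨h2M, p2, ⟨hp2M, hp2proj, hp2fin⟩, hp2y⟩ := h2
  obtain ⟨hp1sa, hp1idem⟩ := hp1proj
  obtain ⟨hp2sa, hp2idem⟩ := hp2proj
  set b : H →L[ℂ] H := (1 - p1) * p2 with hbdef
  have hbM : b ∈ M := mul_mem (sub_mem (one_mem M) hp1M) hp2M
  obtain ⟨A, hAM, hAsa, hAA⟩ := aux_sqrt_exists M hbM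
  obtain ⟨v, P, hvM, hvv, hvA, hvP, hPA, hkill, hfixP⟩ := aux_polar M hbM hAM hAsa hAA
  -- b * (1 - p2) = 0
  have hb1p2 : b * (1 - p2) = 0 := by
    rw [hbdef, mul_assoc, mul_sub, mul_one, hp2idem, sub_self, mul_zero]
  -- A * p2 = A
  have hA1p2 : A * (1 - p2) = 0 := by
    ext ξ
    have hx : b ((1 - p2) ξ) = 0 := by
      have h := ContinuousLinearMap.ext_iff.mp hb1p2 ξ
      simpa [ContinuousLinearMap.mul_apply] using h
    have h := aux_inner_eq hAsa hAA ((1 - p2) ξ) ((1 - p2) ξ)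
    rw [hx] at h
    simp only [inner_zero_left] at h
    have h0 : A ((1 - p2) ξ) = 0 := inner_self_eq_zero.mp h
    simpa [ContinuousLinearMap.mul_apply] using h0
  have hAp2 : A * p2 = A := by
    have h := hA1p2
    rw [mul_sub, mul_one] at h
    have := sub_eq_zero.mp h
    exact this.symm
  have hp2A : p2 * A = A := by
    have h := congrArg star hAp2
    rw [star_mul, hp2sa.star_eq, hAsa.star_eq] at h
    exact h
  -- projection facts for P
  have hp2P : p2 * P = P := hfixP p2 hp2A
  have hPsa : IsSelfAdjoint P := by
    rw [← hvv, IsSelfAdjoint, star_mul, star_star]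
  have hPp2 : P * p2 = P := by
    have h := congrArg star hp2P
    rw [star_mul, hPsa.star_eq, hp2sa.star_eq] at h
    exact h
  have hPidem : P * P = P := by
    nth_rewrite 1 [← hvv]
    rw [mul_assoc, hvP, hvv]
  have hPM : P ∈ M := by rw [← hvv]; exact mul_mem (star_mem hvM) hvM
  have hPproj : IsProjection P := ⟨hPsa, hPidem⟩
  -- q := v * star v
  set q : H →L[ℂ] H := v * star v with hqdef
  have hqM : q ∈ M := mul_mem hvM (star_mem hvM)
  have hqsa : IsSelfAdjoint q := by rw [hqdef, IsSelfAdjoint, star_mul, star_star]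
  have hqq : q * q = q := by
    have h1 : q * q = v * (P * star v) := by
      rw [hqdef, ← hvv]
      simp only [mul_assoc]
    rw [h1, ← mul_assoc, hvP]
  have hq_b : q * b = b := by
    have h1 : q * b = v * (P * A) := by
      rw [hqdef, ← hvA, ← hvv]
      simp only [mul_assoc]
    rw [h1, hPA, hvA]
  have hp1b : p1 * b = 0 := by
    rw [hbdef, ← mul_assoc, mul_sub, mul_one, hp1idem, sub_self, zero_mul]
  have hp1v : p1 * v = 0 := hkill p1 hp1b
  have hp1q : p1 * q = 0 := by rw [hqdef, ← mul_assoc, hp1v, zero_mul]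
  have hqp1 : q * p1 = 0 := by
    have h := congrArg star hp1q
    rw [star_mul, hqsa.star_eq, hp1sa.star_eq, star_zero] at h
    exact h
  -- p := p1 + q
  set p : H →L[ℂ] H := p1 + q with hpdef
  have hpM : p ∈ M := add_mem hp1M hqM
  have hpsa : IsSelfAdjoint p := hp1sa.add hqsa
  have hpidem : p * p = p := by
    rw [hpdef, add_mul, mul_add, mul_add, hp1idem, hqq, hp1q, hqp1]
    abel
  have hpproj : IsProjection p := ⟨hpsa, hpidem⟩
  -- trace bounds
  have hPle : τ P ≤ τ p2 := aux_tau_mono M τ hτ hPM hp2M hPproj ⟨hp2sa, hp2idem⟩ hp2P hPp2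
  have hPfin : τ P < ⊤ := lt_of_le_of_lt hPle hp2fin
  have hqP : τ q = τ P := by
    have h := hτ.tracial v hvM
    rw [hvv] at h
    exact h.symm
  have hqfin : τ q < ⊤ := by rw [hqP]; exact hPfin
  have hpfin : τ p < ⊤ := by
    rw [hpdef, hτ.additive p1 hp1M q hqM (aux_proj_isPositive hp1sa hp1idem)
      (aux_proj_isPositive hqsa hqq)]
    exact ENNReal.add_lt_top.mpr ⟨hp1fin, hqfin⟩
  -- p fixes y1 + y2
  have hsplit : p2 = p1 * p2 + b := by
    rw [hbdef, sub_mul, one_mul]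
    abel
  have hqp2 : q * p2 = b := by
    conv_lhs => rw [hsplit]
    rw [mul_add, ← mul_assoc, hqp1, zero_mul, zero_add, hq_b]
  have hpp2 : p * p2 = p2 := by
    rw [hpdef, add_mul, hqp2]
    exact hsplit.symm
  have hpp1 : p * p1 = p1 := by
    rw [hpdef, add_mul, hp1idem, hqp1, add_zero]
  have hpy1 : p * y1 = y1 := by
    conv_lhs => rw [← hp1y]
    rw [← mul_assoc, hpp1, hp1y]
  have hpy2 : p * y2 = y2 := by
    conv_lhs => rw [← hp2y]
    rw [← mul_assoc, hpp2, hp2y]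
  refine ⟨add_mem h1M h2M, p, ⟨hpM, hpproj, hpfin⟩, ?_⟩
  rw [mul_add, hpy1, hpy2]


lemma aux_Phi_zero {M : VonNeumannAlgebra H} {τ : (H →L[ℂ] H) → ℝ≥0∞}
    (NI : NormedIdeal M τ) : NI.Φ 0 = 0 := by
  have h := NI.Φ_smul 0 0
  simpa using h

lemma aux_Phi_neg {M : VonNeumannAlgebra H} {τ : (H →L[ℂ] H) → ℝ≥0∞}
    (NI : NormedIdeal M τ) (x : H →L[ℂ] H) : NI.Φ (-x) = NI.Φ x := by
  have h := NI.Φ_smul (-1) x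
  simpa using h

lemma aux_Phi_sum_le {M : VonNeumannAlgebra H} {τ : (H →L[ℂ] H) → ℝ≥0∞}
    (NI : NormedIdeal M τ) (s : Finset ℕ) (g : ℕ → H →L[ℂ] H) :
    NI.Φ (∑ i ∈ s, g i) ≤ ∑ i ∈ s, NI.Φ (g i) := by
  induction s using Finset.cons_induction with
  | empty => simp [aux_Phi_zero]
  | cons a s ha ih =>
    rw [Finset.sum_cons, Finset.sum_cons]
    exact le_trans (NI.Φ_add _ _) (by linarith)

lemma aux_K_sub {M : VonNeumannAlgebra H} {τ : (H →L[ℂ] H) → ℝ≥0∞}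
    (NI : NormedIdeal M τ) {x y : H →L[ℂ] H} (hx : x ∈ NI.K) (hy : y ∈ NI.K) :
    x - y ∈ NI.K := by
  have h := NI.add_mem hx (NI.smul_mem (-1) hy)
  rw [neg_one_smul] at h
  rwa [sub_eq_add_neg]

lemma aux_memK0_add {M : VonNeumannAlgebra H} {τ : (H →L[ℂ] H) → ℝ≥0∞}
    (hτ : IsTracialWeight M τ) (NI : NormedIdeal M τ) {x1 x2 : H →L[ℂ] H}
    (h1 : NI.memK0 x1) (h2 : NI.memK0 x2) : NI.memK0 (x1 + x2) := by
  refine ⟨NI.add_mem h1.1 h2.1, fun ε hε => ?_⟩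
  obtain ⟨z1, hz1, he1⟩ := h1.2 (ε/2) (by linarith)
  obtain ⟨z2, hz2, he2⟩ := h2.2 (ε/2) (by linarith)
  refine ⟨z1 + z2, aux_finiteRank_add' M τ hτ hz1 hz2, ?_⟩
  have hre : x1 + x2 - (z1 + z2) = (x1 - z1) + (x2 - z2) := by abel
  rw [hre]
  calc NI.Φ ((x1 - z1) + (x2 - z2)) ≤ NI.Φ (x1 - z1) + NI.Φ (x2 - z2) := NI.Φ_add _ _
    _ < ε := by linarith

end Aux



open Stmt in
/-- If `{x_n} ⊆ K_Φ^0` with `Σ_n x_n → x ∈ M` in the weak(*) topology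
(tested against vector states) and `Σ_n Φ(x_n) < ∞`, then `x ∈ K_Φ^0` and the partial
sums converge to `x` in `Φ`-norm. -/
theorem normedIdeal_summable
    {H : Type} [NormedAddCommGroup H] [InnerProductSpace ℂ H] [CompleteSpace H]
    (M : VonNeumannAlgebra H) (τ : (H →L[ℂ] H) → ℝ≥0∞)
    (hτ : IsTracialWeight M τ) (NI : NormedIdeal M τ)
    (f : ℕ → H →L[ℂ] H) (hf : ∀ n, NI.memK0 (f n))
    (x : H →L[ℂ] H) (hxM : x ∈ M)
    (hweak : ∀ ξ η : H, Filter.Tendsto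
      (fun k => (inner ℂ η ((∑ n ∈ Finset.range k, f n) ξ) : ℂ)) Filter.atTop
      (nhds (inner ℂ η (x ξ))))
    (hsum : Summable (fun n => NI.Φ (f n))) :
    NI.memK0 x ∧ Filter.Tendsto
      (fun k => NI.Φ (x - ∑ n ∈ Finset.range k, f n)) Filter.atTop (nhds 0) := by
  classical
  set S : ℕ → (H →L[ℂ] H) := fun k => ∑ n ∈ Finset.range k, f n with hS
  have hSK : ∀ k, S k ∈ NI.K := by
    intro k
    induction k with
    | zero => simpa [hS] using NI.zero_mem
    | succ k ih =>
      have : S (k + 1) = S k + f k := by rw [hS]; exact Finset.sum_range_succ f k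
      rw [this]
      exact NI.add_mem ih (hf k).1
  have hSmem0 : ∀ k, NI.memK0 (S k) := by
    intro k
    induction k with
    | zero =>
      refine ⟨by simpa [hS] using NI.zero_mem, fun ε hε => ?_⟩
      obtain ⟨y0, hy0, -⟩ := (hf 0).2 1 one_pos
      obtain ⟨-, p0, hp0, -⟩ := hy0
      refine ⟨0, ⟨zero_mem M, p0, hp0, mul_zero p0⟩, ?_⟩
      simpa [hS, aux_Phi_zero] using hε
    | succ k ih =>
      have hrw : S (k + 1) = S k + f k := by rw [hS]; exact Finset.sum_range_succ f k
      rw [hrw]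
      exact aux_memK0_add hτ NI ih (hf k)
  -- partial sums of Φ values
  set t : ℕ → ℝ := fun k => ∑ n ∈ Finset.range k, NI.Φ (f n) with ht
  have htcauchy : CauchySeq t := hsum.hasSum.tendsto_sum_nat.cauchySeq
  have hbound : ∀ m n : ℕ, n ≤ m → NI.Φ (S m - S n) ≤ t m - t n := by
    intro m n hnm
    have h1 : S m - S n = ∑ i ∈ Finset.Ico n m, f i := (Finset.sum_Ico_eq_sub f hnm).symm
    have h2 : t m - t n = ∑ i ∈ Finset.Ico n m, NI.Φ (f i) :=
      (Finset.sum_Ico_eq_sub (fun n => NI.Φ (f n)) hnm).symm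
    rw [h1, h2]
    exact aux_Phi_sum_le NI _ f
  have hScauchy : ∀ ε : ℝ, 0 < ε → ∃ N, ∀ m ≥ N, ∀ n ≥ N, NI.Φ (S m - S n) < ε := by
    intro ε hε
    obtain ⟨N, hN⟩ := Metric.cauchySeq_iff.mp htcauchy ε hε
    refine ⟨N, fun m hm n hn => ?_⟩
    rcases le_total n m with h | h
    · calc NI.Φ (S m - S n) ≤ t m - t n := hbound m n h
        _ ≤ |t m - t n| := le_abs_self _
        _ < ε := by rw [← Real.dist_eq]; exact hN m hm n hn
    · have hneg : S m - S n = -(S n - S m) := by abel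
      rw [hneg, aux_Phi_neg]
      calc NI.Φ (S n - S m) ≤ t n - t m := hbound n m h
        _ ≤ |t n - t m| := le_abs_self _
        _ < ε := by rw [← Real.dist_eq]; exact hN n hn m hm
  obtain ⟨y, hyK, hy⟩ := NI.complete S hSK hScauchy
  have htend : Filter.Tendsto (fun k => NI.Φ (y - S k)) Filter.atTop (nhds 0) := by
    rw [Metric.tendsto_atTop]
    intro ε hε
    obtain ⟨N, hN⟩ := hy ε hε
    refine ⟨N, fun n hn => ?_⟩
    rw [Real.dist_eq, sub_zero, abs_of_nonneg (NI.Φ_nonneg _)]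
    exact hN n hn
  have hnormt : Filter.Tendsto (fun k => ‖y - S k‖) Filter.atTop (nhds 0) := by
    have hc := NI.dom_pos
    have hb : ∀ k, ‖y - S k‖ ≤ NI.Φ (y - S k) / NI.dom_const := by
      intro k
      rw [le_div_iff₀ hc, mul_comm]
      exact NI.dominating _ (aux_K_sub NI hyK (hSK k))
    have hlim : Filter.Tendsto (fun k => NI.Φ (y - S k) / NI.dom_const)
        Filter.atTop (nhds 0) := by
      have := htend.div_const NI.dom_const
      simpa using this
    exact squeeze_zero (fun k => norm_nonneg _) hb hlim
  have hSy : ∀ ξ η : H, Filter.Tendsto (fun k => (inner ℂ η ((S k) ξ) : ℂ)) Filter.atTop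
      (nhds (inner ℂ η (y ξ))) := by
    intro ξ η
    have h1 : Filter.Tendsto (fun k => (S k) ξ) Filter.atTop (nhds (y ξ)) := by
      rw [tendsto_iff_norm_sub_tendsto_zero]
      have hb : ∀ k, ‖(S k) ξ - y ξ‖ ≤ ‖y - S k‖ * ‖ξ‖ := by
        intro k
        have h2 : (S k) ξ - y ξ = (S k - y) ξ := by simp
        rw [h2, ← norm_neg, ← ContinuousLinearMap.neg_apply, neg_sub]
        exact (y - S k).le_opNorm ξ
      have hlim : Filter.Tendsto (fun k => ‖y - S k‖ * ‖ξ‖) Filter.atTop (nhds 0) := by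
        have := hnormt.mul_const ‖ξ‖
        simpa using this
      exact squeeze_zero (fun k => norm_nonneg _) hb hlim
    exact Filter.Tendsto.inner tendsto_const_nhds h1
  have hxy : x = y := by
    ext ξ
    refine ext_inner_left ℂ fun η => ?_
    exact tendsto_nhds_unique (hweak ξ η) (hSy ξ η)
  have hxtend : Filter.Tendsto (fun k => NI.Φ (x - S k)) Filter.atTop (nhds 0) := by
    rw [hxy]; exact htend
  constructor
  · refine ⟨by rw [hxy]; exact hyK, fun ε hε => ?_⟩
    obtain ⟨N, hN⟩ := Metric.tendsto_atTop.mp hxtend (ε/2) (by linarith)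
    have hN' : NI.Φ (x - S N) < ε/2 := by
      have := hN N le_rfl
      rwa [Real.dist_eq, sub_zero, abs_of_nonneg (NI.Φ_nonneg _)] at this
    obtain ⟨z, hz, hzΦ⟩ := (hSmem0 N).2 (ε/2) (by linarith)
    refine ⟨z, hz, ?_⟩
    have hre : x - z = (x - S N) + (S N - z) := by abel
    rw [hre]
    calc NI.Φ ((x - S N) + (S N - z)) ≤ NI.Φ (x - S N) + NI.Φ (S N - z) := NI.Φ_add _ _
      _ < ε := by linarith
  · exact hxtend
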